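/- Let M be a symmetric positive definite 4×4 real matrix and let B be the 4×4 matrix with rows (0,0,0,−2), (0,1,0,0), (0,0,1,0), (−2,0,0,0). Then the minimum of AᵀMA over the constraint set {A ∈ ℝ⁴ : AᵀBA = 1} is attained, and its value equals the smallest positive root η* of the equation det(M − ηB) = 0; moreover, any minimizer A satisfies MA = η* BA. -/

import Mathlib

open Matrix

/-- The matrix of the Pratt constraint `B² + C² - 4AD = 1`. -/
def prattB : Matrix (Fin 4) (Fin 4) ℝ :=
  !![0, 0, 0, -2; 0, 1, 0, 0; 0, 0, 1, 0; -2, 0, 0, 0]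

noncomputable def qclm (N : Matrix (Fin 4) (Fin 4) ℝ) :
    (Fin 4 → ℝ) →L[ℝ] (Fin 4 → ℝ) →L[ℝ] ℝ :=
  LinearMap.toContinuousLinearMap
    { toFun := fun v => LinearMap.toContinuousLinearMap (Matrix.toBilin' N v)
      map_add' := fun x y => by ext w; simp
      map_smul' := fun c x => by ext w; simp }

@[simp] lemma qclm_apply (N : Matrix (Fin 4) (Fin 4) ℝ) (v w : Fin 4 → ℝ) :
    qclm N v w = v ⬝ᵥ N.mulVec w := by
  simp [qclm, Matrix.toBilin'_apply']

lemma dot_symm (N : Matrix (Fin 4) (Fin 4) ℝ) (hN : Nᵀ = N) (v w : Fin 4 → ℝ) :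
    w ⬝ᵥ N.mulVec v = v ⬝ᵥ N.mulVec w := by
  rw [Matrix.dotProduct_mulVec, ← Matrix.mulVec_transpose, hN, dotProduct_comm]

lemma hasStrict_quad (N : Matrix (Fin 4) (Fin 4) ℝ) (hN : Nᵀ = N) (v : Fin 4 → ℝ) :
    HasStrictFDerivAt (fun u : Fin 4 → ℝ => u ⬝ᵥ N.mulVec u) ((2:ℝ) • qclm N v) v := by
  have hb := (qclm N).isBoundedBilinearMap
  have h1 := hb.hasStrictFDerivAt (v, v)
  have h2 : HasStrictFDerivAt (fun u : Fin 4 → ℝ => (u, u))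
      ((ContinuousLinearMap.id ℝ (Fin 4 → ℝ)).prod (ContinuousLinearMap.id ℝ (Fin 4 → ℝ))) v :=
    (hasStrictFDerivAt_id v).prodMk (hasStrictFDerivAt_id v)
  have h3 := HasStrictFDerivAt.comp (f := fun u : Fin 4 → ℝ => (u, u)) v h1 h2
  have hfun : (fun u : Fin 4 → ℝ => u ⬝ᵥ N.mulVec u) =
      (fun p : (Fin 4 → ℝ) × (Fin 4 → ℝ) => qclm N p.1 p.2) ∘ (fun u => (u, u)) := by
    funext u; simp
  have hder : (hb.deriv (v, v)).comp
      ((ContinuousLinearMap.id ℝ (Fin 4 → ℝ)).prod (ContinuousLinearMap.id ℝ (Fin 4 → ℝ)))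
      = (2:ℝ) • qclm N v := by
    ext w
    simp [IsBoundedBilinearMap.deriv_apply, dot_symm N hN v w, two_mul]
  rw [hfun, ← hder]
  exact h3

lemma prattB_symm : prattBᵀ = prattB := by
  ext i j; fin_cases i <;> fin_cases j <;> simp [prattB] <;> rfl

lemma posdef_dot {M : Matrix (Fin 4) (Fin 4) ℝ} (hM : M.PosDef) {v : Fin 4 → ℝ}
    (hv : v ≠ 0) : 0 < v ⬝ᵥ M.mulVec v := by
  have := hM.dotProduct_mulVec_pos hv
  simpa using this

lemma lagrange (M : Matrix (Fin 4) (Fin 4) ℝ) (hMs : Mᵀ = M) (v : Fin 4 → ℝ)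
    (hv : v ⬝ᵥ prattB.mulVec v = 1)
    (hmin : ∀ w : Fin 4 → ℝ, w ⬝ᵥ prattB.mulVec w = 1 →
      v ⬝ᵥ M.mulVec v ≤ w ⬝ᵥ M.mulVec w) :
    M.mulVec v = (v ⬝ᵥ M.mulVec v) • prattB.mulVec v := by
  set η := v ⬝ᵥ M.mulVec v with hη
  have hextr : IsLocalExtrOn (fun u : Fin 4 → ℝ => u ⬝ᵥ M.mulVec u)
      {x | x ⬝ᵥ prattB.mulVec x = v ⬝ᵥ prattB.mulVec v} v := by
    left
    refine IsMinOn.localize ?_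
    intro x hx
    exact hmin x (by rw [← hv]; exact hx)
  obtain ⟨a, b, hab, h0⟩ := hextr.exists_multipliers_of_hasStrictFDerivAt_1d
    (hasStrict_quad prattB prattB_symm v) (hasStrict_quad M hMs v)
  have h0' : ∀ w, a * (v ⬝ᵥ prattB.mulVec w) + b * (v ⬝ᵥ M.mulVec w) = 0 := by
    intro w
    have := ContinuousLinearMap.ext_iff.mp h0 w
    simp at this
    linarith
  have hv0 := h0' v
  rw [hv, ← hη] at hv0
  have hb : b ≠ 0 := by
    rintro rfl
    simp at hv0
    subst hv0
    simp at hab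
  have key : ∀ w, v ⬝ᵥ M.mulVec w = η * (v ⬝ᵥ prattB.mulVec w) := by
    intro w
    have h := h0' w
    have ha : a = -(b * η) := by linarith
    rw [ha] at h
    exact mul_left_cancel₀ hb (by linear_combination h)
  funext i
  have h1 := key (Pi.single i 1)
  rw [dot_symm M hMs, dot_symm prattB prattB_symm] at h1
  simpa [single_dotProduct] using h1

lemma quad_cont (N : Matrix (Fin 4) (Fin 4) ℝ) :
    Continuous (fun v : Fin 4 → ℝ => v ⬝ᵥ N.mulVec v) := by
  simp only [dotProduct, Matrix.mulVec]
  exact continuous_finset_sum _ fun i _ => (continuous_apply i).mul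
    (continuous_finset_sum _ fun j _ => continuous_const.mul (continuous_apply j))

lemma quad_smul (N : Matrix (Fin 4) (Fin 4) ℝ) (c : ℝ) (v : Fin 4 → ℝ) :
    (c • v) ⬝ᵥ N.mulVec (c • v) = c ^ 2 * (v ⬝ᵥ N.mulVec v) := by
  rw [Matrix.mulVec_smul, smul_dotProduct, dotProduct_smul,
    smul_eq_mul, smul_eq_mul]
  ring

lemma coercive {M : Matrix (Fin 4) (Fin 4) ℝ} (hM : M.PosDef) :
    ∃ c > 0, ∀ v : Fin 4 → ℝ, c * ‖v‖ ^ 2 ≤ v ⬝ᵥ M.mulVec v := by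
  obtain ⟨u, hu, humin⟩ := (isCompact_sphere (0 : Fin 4 → ℝ) 1).exists_isMinOn
    (NormedSpace.sphere_nonempty.mpr zero_le_one) (quad_cont M).continuousOn
  have hu1 : ‖u‖ = 1 := by simpa using hu
  have hune : u ≠ 0 := by intro h; rw [h] at hu1; simp at hu1
  refine ⟨u ⬝ᵥ M.mulVec u, posdef_dot hM hune, fun v => ?_⟩
  rcases eq_or_ne v 0 with rfl | hv
  · simp
  · have hnv : (0:ℝ) < ‖v‖ := norm_pos_iff.mpr hv
    have hmem : ‖v‖⁻¹ • v ∈ Metric.sphere (0 : Fin 4 → ℝ) 1 := by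
      simp [norm_smul, abs_of_pos (inv_pos.mpr hnv), inv_mul_cancel₀ hnv.ne']
    have h1 : u ⬝ᵥ M.mulVec u ≤ (‖v‖⁻¹ • v) ⬝ᵥ M.mulVec (‖v‖⁻¹ • v) := humin hmem
    have h2 : (‖v‖⁻¹ • v) ⬝ᵥ M.mulVec (‖v‖⁻¹ • v) = ‖v‖⁻¹ ^ 2 * (v ⬝ᵥ M.mulVec v) :=
      quad_smul M _ v
    rw [h2] at h1
    have := mul_le_mul_of_nonneg_left h1 (sq_nonneg ‖v‖)
    calc (u ⬝ᵥ M.mulVec u) * ‖v‖ ^ 2 = ‖v‖ ^ 2 * (u ⬝ᵥ M.mulVec u) := by ring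
    _ ≤ ‖v‖ ^ 2 * (‖v‖⁻¹ ^ 2 * (v ⬝ᵥ M.mulVec v)) := this
    _ = v ⬝ᵥ M.mulVec v := by field_simp

lemma base_pt : (![0,1,0,0] : Fin 4 → ℝ) ⬝ᵥ prattB.mulVec ![0,1,0,0] = 1 := by
  simp [prattB, Matrix.mulVec, dotProduct, Fin.sum_univ_four]

lemma exists_min (M : Matrix (Fin 4) (Fin 4) ℝ) (hM : M.PosDef) :
    ∃ v : Fin 4 → ℝ, v ⬝ᵥ prattB.mulVec v = 1 ∧
      ∀ w : Fin 4 → ℝ, w ⬝ᵥ prattB.mulVec w = 1 →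
        v ⬝ᵥ M.mulVec v ≤ w ⬝ᵥ M.mulVec w := by
  obtain ⟨c, hc, hcoer⟩ := coercive hM
  set v₀ : Fin 4 → ℝ := ![0,1,0,0] with hv₀def
  have hv₀ := base_pt
  set φ := fun v : Fin 4 → ℝ => v ⬝ᵥ M.mulVec v with hφ
  set R := Real.sqrt (φ v₀ / c) with hR
  have hφ₀pos : 0 < φ v₀ := posdef_dot hM (by intro h; simpa [hv₀def] using congrFun h 1)
  have hR2 : R ^ 2 = φ v₀ / c := Real.sq_sqrt (by positivity)
  set K := {x : Fin 4 → ℝ | x ⬝ᵥ prattB.mulVec x = 1} ∩ Metric.closedBall 0 R with hK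
  have hKc : IsCompact K :=
    (isCompact_closedBall (0 : Fin 4 → ℝ) R).inter_left
      (isClosed_eq (quad_cont prattB) continuous_const)
  have hv₀K : v₀ ∈ K := by
    refine ⟨hv₀, ?_⟩
    simp only [Metric.mem_closedBall, dist_zero_right]
    have h1 : c * ‖v₀‖ ^ 2 ≤ φ v₀ := hcoer v₀
    have h2 : ‖v₀‖ ^ 2 ≤ φ v₀ / c := by
      rw [le_div_iff₀ hc]; linarith
    exact (Real.le_sqrt (norm_nonneg _) (by positivity)).mpr h2
  obtain ⟨v, hvK, hvmin⟩ := hKc.exists_isMinOn ⟨v₀, hv₀K⟩ (quad_cont M).continuousOn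
  refine ⟨v, hvK.1, fun w hw => ?_⟩
  by_cases hwb : ‖w‖ ≤ R
  · exact hvmin ⟨hw, by simpa [Metric.mem_closedBall, dist_zero_right] using hwb⟩
  · push_neg at hwb
    have h1 : φ v ≤ φ v₀ := hvmin hv₀K
    have h2 : c * ‖w‖ ^ 2 ≤ φ w := hcoer w
    have h3 : φ v₀ ≤ c * ‖w‖ ^ 2 := by
      have hRnn : 0 ≤ R := Real.sqrt_nonneg _
      have : R ^ 2 ≤ ‖w‖ ^ 2 := by nlinarith
      rw [hR2] at this
      rw [div_le_iff₀ hc] at this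
      nlinarith
    calc φ v ≤ φ v₀ := h1
    _ ≤ c * ‖w‖ ^ 2 := h3
    _ ≤ φ w := h2

/-- For a symmetric positive definite 4×4 matrix `M`, the minimum of
`AᵀMA` over `{A : AᵀBA = 1}` is attained, its value is the smallest positive root
`η*` of `det(M - ηB) = 0`, and any minimizer `A` satisfies `MA = η* BA`. -/
theorem stmt_18 (M : Matrix (Fin 4) (Fin 4) ℝ) (hM : M.PosDef) :
    ∃ ηs : ℝ, IsLeast {η : ℝ | 0 < η ∧ (M - η • prattB).det = 0} ηs ∧
      (∃ v : Fin 4 → ℝ, v ⬝ᵥ prattB.mulVec v = 1 ∧ v ⬝ᵥ M.mulVec v = ηs ∧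
        ∀ w : Fin 4 → ℝ, w ⬝ᵥ prattB.mulVec w = 1 →
          v ⬝ᵥ M.mulVec v ≤ w ⬝ᵥ M.mulVec w) ∧
      (∀ v : Fin 4 → ℝ, v ⬝ᵥ prattB.mulVec v = 1 →
        (∀ w : Fin 4 → ℝ, w ⬝ᵥ prattB.mulVec w = 1 →
          v ⬝ᵥ M.mulVec v ≤ w ⬝ᵥ M.mulVec w) →
        M.mulVec v = ηs • prattB.mulVec v ∧ v ⬝ᵥ M.mulVec v = ηs) := by
  have hMs : Mᵀ = M := by
    rw [← Matrix.conjTranspose_eq_transpose_of_trivial]; exact hM.1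
  obtain ⟨v, hv, hmin⟩ := exists_min M hM
  set η := v ⬝ᵥ M.mulVec v with hηdef
  have hvne : v ≠ 0 := by
    intro h; rw [h] at hv; simp at hv
  have hηpos : 0 < η := posdef_dot hM hvne
  have hlag := lagrange M hMs v hv hmin
  have hdet : (M - η • prattB).det = 0 := by
    rw [← Matrix.exists_mulVec_eq_zero_iff]
    refine ⟨v, hvne, ?_⟩
    rw [Matrix.sub_mulVec, Matrix.smul_mulVec, hlag, ← hηdef, sub_self]
  refine ⟨η, ⟨⟨hηpos, hdet⟩, ?_⟩, ⟨v, hv, rfl, hmin⟩, ?_⟩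
  · rintro η' ⟨hη'pos, hdet'⟩
    obtain ⟨w, hwne, hw0⟩ := Matrix.exists_mulVec_eq_zero_iff.mpr hdet'
    have hMw : M.mulVec w = η' • prattB.mulVec w := by
      rw [Matrix.sub_mulVec, Matrix.smul_mulVec, sub_eq_zero] at hw0
      exact hw0
    have hwM : 0 < w ⬝ᵥ M.mulVec w := posdef_dot hM hwne
    set d := w ⬝ᵥ prattB.mulVec w with hddef
    have hd : w ⬝ᵥ M.mulVec w = η' * d := by
      rw [hMw, dotProduct_smul, smul_eq_mul]
    have hdpos : 0 < d := by
      have h := hwM; rw [hd] at h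
      nlinarith
    have hsq : Real.sqrt d ^ 2 = d := Real.sq_sqrt hdpos.le
    have hsne : Real.sqrt d ≠ 0 := by positivity
    set u := (Real.sqrt d)⁻¹ • w with hudef
    have hu1 : u ⬝ᵥ prattB.mulVec u = 1 := by
      rw [hudef, quad_smul, ← hddef, inv_pow, hsq, inv_mul_cancel₀ hdpos.ne']
    have hu2 : u ⬝ᵥ M.mulVec u = η' := by
      rw [hudef, quad_smul, hd, inv_pow, hsq]
      field_simp
    have := hmin u hu1
    rw [hu2] at this
    exact this
  · intro v' hv' hmin'
    have hval : v' ⬝ᵥ M.mulVec v' = η :=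
      le_antisymm (hmin' v hv) (hmin v' hv')
    have h := lagrange M hMs v' hv' hmin'
    rw [hval] at h
    exact ⟨h, hval⟩
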